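/- Let γ > 0, θ ∈ [0,1], and let x, z, z⁺, w, x^*, ξ ∈ H satisfy θ(z⁺ − z) + γ∇f(w) + γξ = 0; set y := (1 − θ)x + θz and x⁺ := y + θ(z⁺ − z). Then (1/(2γ)) ‖θz⁺ − θx^*‖² ≤ (1/(2γ)) ‖θz − θx^*‖² + (1/(2γ)) ‖x⁺ − y‖² − ⟨ξ, θz − θx^*⟩ + (1 − θ) f(x) + θ f(x^*) − f(y) + ⟨∇f(y) − ∇f(w), y − w⟩. -/

import Mathlib

open scoped RealInnerProductSpace
open Filter Set Topology

lemma grad_ineq_aux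
    {H : Type*} [NormedAddCommGroup H] [InnerProductSpace ℝ H]
    (f : H → ℝ) (f' : H → H)
    (hconv : ConvexOn ℝ Set.univ f)
    (hgrad : ∀ u, HasFDerivAt f ((innerSL ℝ (f' u)) : H →L[ℝ] ℝ) u)
    (a b : H) : f a + ⟪f' a, b - a⟫ ≤ f b := by
  set g : ℝ → ℝ := fun t => f (a + t • (b - a)) with hgdef
  have hc : HasDerivAt (fun t : ℝ => a + t • (b - a)) (b - a) 0 := by
    simpa using ((hasDerivAt_id (0:ℝ)).smul_const (b - a)).const_add a
  have hg : HasDerivAt g ⟪f' a, b - a⟫ 0 := by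
    have h0 : a + (0:ℝ) • (b - a) = a := by simp
    have := (h0 ▸ hgrad a).comp_hasDerivAt (0:ℝ) hc
    rw [h0] at this
    exact this
  have hslope : Tendsto (slope g 0) (𝓝[>] (0:ℝ)) (𝓝 ⟪f' a, b - a⟫) :=
    (hasDerivAt_iff_tendsto_slope.mp hg).mono_left
      (nhdsWithin_mono _ (fun t ht => ne_of_gt ht))
  have hbound : ∀ᶠ t in 𝓝[>] (0:ℝ), slope g 0 t ≤ f b - f a := by
    filter_upwards [Ioc_mem_nhdsGT (zero_lt_one)] with t ht
    have ht0 : 0 < t := ht.1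
    have hconvt : g t ≤ (1 - t) * f a + t * f b := by
      have h1 : a + t • (b - a) = (1 - t) • a + t • b := by module
      have := hconv.2 (Set.mem_univ a) (Set.mem_univ b)
        (by linarith [ht.2] : (0:ℝ) ≤ 1 - t) ht0.le (by ring)
      simpa [g, h1] using this
    have hg0 : g 0 = f a := by simp [g]
    have hsl : slope g 0 t = (g t - f a) / t := by simp [slope, hg0]; ring
    rw [hsl, div_le_iff₀ ht0]
    nlinarith
  have := le_of_tendsto hslope hbound
  linarith


/-- Mirror-descent-type inequality for a delayed-gradient step: with
`θ(z⁺ − z) + γ∇f(w) + γξ = 0`, `y = (1−θ)x + θz` and `x⁺ = y + θ(z⁺ − z)`,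
`(1/(2γ))‖θz⁺ − θx^*‖² ≤ (1/(2γ))‖θz − θx^*‖² + (1/(2γ))‖x⁺ − y‖² − ⟨ξ, θz − θx^*⟩
  + (1−θ)f(x) + θf(x^*) − f(y) + ⟨∇f(y) − ∇f(w), y − w⟩`. -/
theorem aagd_mirror_step
    {H : Type*} [NormedAddCommGroup H] [InnerProductSpace ℝ H]
    (f : H → ℝ) (f' : H → H)
    (hconv : ConvexOn ℝ Set.univ f)
    (hgrad : ∀ u, HasFDerivAt f ((innerSL ℝ (f' u)) : H →L[ℝ] ℝ) u)
    (γ θ : ℝ) (hγ : 0 < γ) (hθ0 : 0 ≤ θ) (hθ1 : θ ≤ 1)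
    (x z zp w xstar ξ : H)
    (hopt : θ • (zp - z) + γ • f' w + γ • ξ = 0) :
    1 / (2 * γ) * ‖θ • zp - θ • xstar‖ ^ 2
      ≤ 1 / (2 * γ) * ‖θ • z - θ • xstar‖ ^ 2
        + 1 / (2 * γ) * ‖(((1 - θ) • x + θ • z) + θ • (zp - z)) - ((1 - θ) • x + θ • z)‖ ^ 2
        - ⟪ξ, θ • z - θ • xstar⟫
        + (1 - θ) * f x + θ * f xstar - f ((1 - θ) • x + θ • z)
        + ⟪f' ((1 - θ) • x + θ • z) - f' w, ((1 - θ) • x + θ • z) - w⟫ := by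
  set y : H := (1 - θ) • x + θ • z with hy
  set a : H := θ • z - θ • xstar with ha
  set d : H := θ • (zp - z) with hd
  -- the step direction
  have hdval : d = -(γ • f' w) - γ • ξ := by
    have h := hopt
    rw [eq_sub_iff_add_eq, sub_add_cancel] at *
    linear_combination (norm := abel) h
  -- cancel in the x⁺ − y norm
  have hxy : (y + d) - y = d := by abel
  -- norm expansion
  have hsum : θ • zp - θ • xstar = a + d := by rw [ha, hd]; module
  have hnorm : ‖θ • zp - θ • xstar‖ ^ 2
      = ‖a‖ ^ 2 + 2 * ⟪a, d⟫ + ‖d‖ ^ 2 := by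
    rw [hsum]; exact norm_add_sq_real a d
  -- inner product of a with d
  have hin : ⟪a, d⟫ = -(γ * ⟪f' w, a⟫) - γ * ⟪ξ, a⟫ := by
    rw [hdval, real_inner_comm]
    simp only [inner_sub_left, inner_neg_left, real_inner_smul_left]
  -- gradient inequalities
  have G1 : f w + ⟪f' w, x - w⟫ ≤ f x := grad_ineq_aux f f' hconv hgrad w x
  have G2 : f w + ⟪f' w, xstar - w⟫ ≤ f xstar := grad_ineq_aux f f' hconv hgrad w xstar
  have G3 : f y + ⟪f' y, w - y⟫ ≤ f w := grad_ineq_aux f f' hconv hgrad y w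
  -- inner product identity I1
  have I1 : -⟪f' w, a⟫
      = (1 - θ) * ⟪f' w, x - w⟫ + θ * ⟪f' w, xstar - w⟫ + ⟪f' w, w - y⟫ := by
    have : (1 - θ) • (x - w) + θ • (xstar - w) + (w - y) = -a := by
      rw [ha, hy]; module
    rw [← real_inner_smul_right, ← real_inner_smul_right, ← inner_add_right,
      ← inner_add_right, this, inner_neg_right]
  have I2 : ⟪f' y - f' w, y - w⟫ = -⟪f' y, w - y⟫ + ⟪f' w, w - y⟫ := by
    simp [inner_sub_left, inner_sub_right]
    ring
  -- key scalar inequality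
  have hkey : -⟪f' w, a⟫ ≤ (1 - θ) * f x + θ * f xstar - f y + ⟪f' y - f' w, y - w⟫ := by
    rw [I1, I2]
    nlinarith [mul_le_mul_of_nonneg_left G1 (by linarith : (0:ℝ) ≤ 1 - θ),
      mul_le_mul_of_nonneg_left G2 hθ0]
  -- finish
  have h2γ : (0:ℝ) < 2 * γ := by linarith
  have hdiv : 1 / (2 * γ) * (2 * ⟪a, d⟫) = -⟪f' w, a⟫ - ⟪ξ, a⟫ := by
    rw [hin]; field_simp
  rw [hxy, hnorm]
  have expand : 1 / (2 * γ) * (‖a‖ ^ 2 + 2 * ⟪a, d⟫ + ‖d‖ ^ 2)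
      = 1 / (2 * γ) * ‖a‖ ^ 2 + 1 / (2 * γ) * ‖d‖ ^ 2 + (-⟪f' w, a⟫ - ⟪ξ, a⟫) := by
    rw [← hdiv]; ring
  rw [expand]
  linarith
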